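/- For 0 ≤ x < 1 and nonnegative integers u, v: ∑_{r=v}^{∞} r^u x^{r−v} ≤ ∑_{k=0}^{u} k! (v+k)^u / (1−x)^{k+1}. -/

import Mathlib

lemma aux_nat (u v j : ℕ) (h : u ≤ j) :
    (v + j) ^ u ≤ (v + u) ^ u * j.descFactorial u := by
  induction u with
  | zero => simp
  | succ u ih =>
    have hu : u ≤ j := Nat.le_of_succ_le h
    have key : v + j ≤ (v + u + 1) * (j - u) := by
      have hd : 1 ≤ j - u := by omega
      have : (v + u) * 1 ≤ (v + u) * (j - u) := Nat.mul_le_mul_left _ hd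
      have expand : (v + u + 1) * (j - u) = (v + u) * (j - u) + (j - u) := by ring
      omega
    calc (v + j) ^ (u + 1) = (v + j) ^ u * (v + j) := by ring
      _ ≤ ((v + u) ^ u * j.descFactorial u) * ((v + u + 1) * (j - u)) :=
          Nat.mul_le_mul (ih hu) key
      _ ≤ ((v + u + 1) ^ u * j.descFactorial u) * ((v + u + 1) * (j - u)) := by
          apply Nat.mul_le_mul_right
          exact Nat.mul_le_mul_right _ (Nat.pow_le_pow_left (by omega) u)
      _ = (v + u + 1) ^ (u + 1) * ((j - u) * j.descFactorial u) := by ring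
      _ = (v + (u + 1)) ^ (u + 1) * j.descFactorial (u + 1) := by
          rw [Nat.descFactorial_succ, ← Nat.add_assoc]

lemma aux_ptwise (u v j : ℕ) :
    ((v : ℝ) + j) ^ u
      ≤ ∑ k ∈ Finset.range (u + 1),
          (k.factorial : ℝ) * ((v : ℝ) + k) ^ u * (j.choose k : ℝ) := by
  have hnonneg : ∀ k ∈ Finset.range (u + 1),
      0 ≤ (k.factorial : ℝ) * ((v : ℝ) + k) ^ u * (j.choose k : ℝ) := by
    intro k _
    positivity
  set m := min j u with hm
  have hmmem : m ∈ Finset.range (u + 1) := Finset.mem_range.mpr (by omega)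
  have hsingle := Finset.single_le_sum hnonneg hmmem
  refine le_trans ?_ hsingle
  rcases le_or_gt j u with hju | huj
  · have hmj : m = j := by omega
    rw [hmj, Nat.choose_self]
    have h1 : (1 : ℝ) ≤ (j.factorial : ℝ) := by
      exact_mod_cast Nat.one_le_iff_ne_zero.mpr j.factorial_ne_zero
    rw [Nat.cast_one, mul_one]
    exact le_mul_of_one_le_left (by positivity) h1
  · have hmu : m = u := by omega
    rw [hmu]
    have hle : u ≤ j := le_of_lt huj
    have hnat := aux_nat u v j hle
    have hcast : ((v : ℝ) + j) ^ u ≤ ((v : ℝ) + u) ^ u * (j.descFactorial u : ℝ) := by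
      exact_mod_cast hnat
    have hdesc : (j.descFactorial u : ℝ) = (u.factorial : ℝ) * (j.choose u : ℝ) := by
      exact_mod_cast Nat.descFactorial_eq_factorial_mul_choose j u
    calc ((v : ℝ) + j) ^ u ≤ ((v : ℝ) + u) ^ u * (j.descFactorial u : ℝ) := hcast
      _ = (u.factorial : ℝ) * ((v : ℝ) + u) ^ u * (j.choose u : ℝ) := by rw [hdesc]; ring

theorem stmt_9 (x : ℝ) (hx0 : 0 ≤ x) (hx1 : x < 1) (u v : ℕ) :
    ∑' j : ℕ, ((v : ℝ) + j) ^ u * x ^ j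
      ≤ ∑ k ∈ Finset.range (u + 1),
          (k.factorial : ℝ) * ((v : ℝ) + k) ^ u / (1 - x) ^ (k + 1) := by
  have hxn : ‖x‖ < 1 := by rw [Real.norm_eq_abs, abs_of_nonneg hx0]; exact hx1
  have hx1' : 0 < 1 - x := by linarith
  -- HasSum for each k of fun j => choose j k * x ^ j
  have hchoose : ∀ k : ℕ, HasSum (fun j : ℕ => (j.choose k : ℝ) * x ^ j)
      (x ^ k / (1 - x) ^ (k + 1)) := by
    intro k
    have h1 : HasSum (fun n : ℕ => ((n + k).choose k : ℝ) * x ^ n)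
        (1 / (1 - x) ^ (k + 1)) := hasSum_choose_mul_geometric_of_norm_lt_one k hxn
    have h2 : HasSum (fun n : ℕ => ((n + k).choose k : ℝ) * x ^ (n + k))
        (x ^ k * (1 / (1 - x) ^ (k + 1))) := by
      have := h1.mul_left (x ^ k)
      convert this using 2 with n
      · rfl
      rw [pow_add]; ring
    have h3 := (hasSum_nat_add_iff
      (f := fun j : ℕ => (j.choose k : ℝ) * x ^ j) k).mp h2
    have hz : ∑ i ∈ Finset.range k, (i.choose k : ℝ) * x ^ i = 0 := by
      apply Finset.sum_eq_zero
      intro i hi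
      rw [Nat.choose_eq_zero_of_lt (Finset.mem_range.mp hi)]
      simp
    rw [hz, add_zero] at h3
    convert h3 using 1
    · rfl
    field_simp
  -- bounding function
  set g : ℕ → ℕ → ℝ := fun k j => ((k.factorial : ℝ) * ((v : ℝ) + k) ^ u) *
      ((j.choose k : ℝ) * x ^ j) with hg
  have hgsum : ∀ k : ℕ, HasSum (g k)
      (((k.factorial : ℝ) * ((v : ℝ) + k) ^ u) * (x ^ k / (1 - x) ^ (k + 1))) :=
    fun k => (hchoose k).mul_left _
  have hGsummable : Summable (fun j => ∑ k ∈ Finset.range (u + 1), g k j) :=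
    summable_sum (fun k _ => (hgsum k).summable)
  have hle : ∀ j : ℕ, ((v : ℝ) + j) ^ u * x ^ j ≤ ∑ k ∈ Finset.range (u + 1), g k j := by
    intro j
    have := aux_ptwise u v j
    have hxj : 0 ≤ x ^ j := pow_nonneg hx0 j
    calc ((v : ℝ) + j) ^ u * x ^ j
        ≤ (∑ k ∈ Finset.range (u + 1),
            (k.factorial : ℝ) * ((v : ℝ) + k) ^ u * (j.choose k : ℝ)) * x ^ j :=
          mul_le_mul_of_nonneg_right this hxj
      _ = ∑ k ∈ Finset.range (u + 1), g k j := by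
          rw [Finset.sum_mul]
          apply Finset.sum_congr rfl
          intro k _
          simp only [hg]; ring
  have hfnonneg : ∀ j : ℕ, 0 ≤ ((v : ℝ) + j) ^ u * x ^ j := by
    intro j; positivity
  have hfsummable : Summable (fun j : ℕ => ((v : ℝ) + j) ^ u * x ^ j) :=
    Summable.of_nonneg_of_le hfnonneg hle hGsummable
  calc ∑' j : ℕ, ((v : ℝ) + j) ^ u * x ^ j
      ≤ ∑' j : ℕ, ∑ k ∈ Finset.range (u + 1), g k j :=
        Summable.tsum_le_tsum hle hfsummable hGsummable
    _ = ∑ k ∈ Finset.range (u + 1), ∑' j : ℕ, g k j :=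
        (Summable.tsum_finsetSum (fun k _ => (hgsum k).summable))
    _ ≤ ∑ k ∈ Finset.range (u + 1),
          (k.factorial : ℝ) * ((v : ℝ) + k) ^ u / (1 - x) ^ (k + 1) := by
        apply Finset.sum_le_sum
        intro k _
        rw [(hgsum k).tsum_eq]
        rw [div_eq_mul_one_div ((k.factorial : ℝ) * ((v : ℝ) + k) ^ u)]
        apply mul_le_mul_of_nonneg_left _ (by positivity)
        rw [div_le_div_iff₀ (by positivity) (by positivity)]
        have : x ^ k ≤ 1 := pow_le_one₀ hx0 (le_of_lt hx1)
        nlinarith [pow_pos hx1' (k + 1)]
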